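/- Let y = ux with u a unitary, E(u)=0, x self-adjoint, u and x *-free over B, and suppose y is B-valued circular with cumulants α_{(1,2)}, α_{(2,1)}. Define N_1(b)=E(ubu*) and N_2(b)=E(u*bu). Then α_{(1,2)}∘N_2 = N_1∘α_{(2,1)} as linear maps on B. -/

import Mathlib

open scoped BigOperators

/-- The word `y^{ε(1)} b₁ ⋯ y^{ε(n)} bₙ` encoded by a list of pairs
`(ε(j), bⱼ)`, where `true` stands for `y` and `false` for `y*`. -/
noncomputable def cword {A : Type*} [Monoid A] [StarMul A]
    (y : A) (l : List (Bool × A)) : A :=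
  (l.map fun p => (if p.1 then y else star y) * p.2).prod

/-- `y` is B-valued circular with second-order cumulant maps
`β true = α_{(1,2)}`, `β false = α_{(2,1)}`. -/
def IsCircularWith {A : Type*} [Ring A] [StarRing A] [Algebra ℂ A] [StarModule ℂ A]
    (B : StarSubalgebra ℂ A) (E : A →ₗ[ℂ] A)
    (y : A) (β : Bool → A →ₗ[ℂ] A) : Prop :=
  ∀ (ε : Bool) (b : A), b ∈ B → ∀ l : List (Bool × A), (∀ q ∈ l, q.2 ∈ B) →
    E (cword y ((ε, b) :: l)) =
      ∑ j : Fin l.length,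
        if (l.get j).1 ≠ ε then
          β ε (b * E (cword y (l.take (j : ℕ)))) * (l.get j).2 *
            E (cword y (l.drop ((j : ℕ) + 1)))
        else 0

/-- Two subsets `S`, `T` are free with respect to `E`. -/
def FreePair {A : Type*} [Ring A] [StarRing A] [Algebra ℂ A]
    (E : A →ₗ[ℂ] A) (S T : Set A) : Prop :=
  ∀ l : List (A × Bool), l ≠ [] →
    (∀ p ∈ l, E p.1 = 0 ∧ (p.2 = true → p.1 ∈ S) ∧ (p.2 = false → p.1 ∈ T)) →
    l.Chain' (fun p q => p.2 ≠ q.2) →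
    E (l.map Prod.fst).prod = 0

/-- If the circular element `y = ux` has a free decomposition with `u` unitary,
`E(u) = 0`, `x` self-adjoint and `u, x` *-free over `B`, then, with
`N₁(b) = E(ubu*)` and `N₂(b) = E(u*bu)`, one has
`α_{(1,2)} ∘ N₂ = N₁ ∘ α_{(2,1)}` on `B`. -/
theorem circular_N1_N2_intertwine
    {A : Type*} [Ring A] [StarRing A] [Algebra ℂ A] [StarModule ℂ A]
    (B : StarSubalgebra ℂ A) (E : A →ₗ[ℂ] A)
    (hErange : ∀ a : A, E a ∈ B)
    (hEid : ∀ b ∈ B, E b = b)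
    (hEstar : ∀ a : A, E (star a) = star (E a))
    (hEbimod : ∀ a : A, ∀ b₁ ∈ B, ∀ b₂ ∈ B, E (b₁ * a * b₂) = b₁ * E a * b₂)
    (u x y : A)
    (huu : u * star u = 1) (hsuu : star u * u = 1)
    (hEu : E u = 0) (hxsa : star x = x)
    (hfree : FreePair E
      (StarAlgebra.adjoin ℂ (insert u (B : Set A)) : StarSubalgebra ℂ A)
      (StarAlgebra.adjoin ℂ (insert x (B : Set A)) : StarSubalgebra ℂ A))
    (hy : y = u * x)
    (β : Bool → A →ₗ[ℂ] A)
    (hcirc : IsCircularWith B E y β) :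
    ∀ b ∈ B, β true (E (star u * b * u)) = E (u * β false b * star u) := by

  intro b hb
  -- abbreviations
  have hBS : ∀ z ∈ B, z ∈ StarAlgebra.adjoin ℂ (insert u (B : Set A)) :=
    fun z hz => StarAlgebra.subset_adjoin ℂ _ (Set.mem_insert_of_mem _ hz)
  have hBT : ∀ z ∈ B, z ∈ StarAlgebra.adjoin ℂ (insert x (B : Set A)) :=
    fun z hz => StarAlgebra.subset_adjoin ℂ _ (Set.mem_insert_of_mem _ hz)
  have huS : u ∈ StarAlgebra.adjoin ℂ (insert u (B : Set A)) :=
    StarAlgebra.subset_adjoin ℂ _ (Set.mem_insert _ _)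
  have hxT : x ∈ StarAlgebra.adjoin ℂ (insert x (B : Set A)) :=
    StarAlgebra.subset_adjoin ℂ _ (Set.mem_insert _ _)
  have hE1 : E 1 = 1 := hEid 1 (one_mem B)
  -- freeness in convenient forms
  have free2ST : ∀ p q : A, p ∈ StarAlgebra.adjoin ℂ (insert u (B : Set A)) →
      q ∈ StarAlgebra.adjoin ℂ (insert x (B : Set A)) → E p = 0 → E q = 0 →
      E (p * q) = 0 := by
    intro p q hp hq hep heq
    have h := hfree [(p, true), (q, false)] (by simp) ?_ (by simp [List.Chain'])
    · simpa using h
    · rintro r hr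
      simp only [List.mem_cons, List.not_mem_nil, or_false] at hr
      rcases hr with rfl | rfl
      · exact ⟨hep, fun _ => hp, fun h => by simp at h⟩
      · exact ⟨heq, fun h => by simp at h, fun _ => hq⟩
  have free2TS : ∀ p q : A, p ∈ StarAlgebra.adjoin ℂ (insert x (B : Set A)) →
      q ∈ StarAlgebra.adjoin ℂ (insert u (B : Set A)) → E p = 0 → E q = 0 →
      E (p * q) = 0 := by
    intro p q hp hq hep heq
    have h := hfree [(p, false), (q, true)] (by simp) ?_ (by simp [List.Chain'])
    · simpa using h
    · rintro r hr
      simp only [List.mem_cons, List.not_mem_nil, or_false] at hr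
      rcases hr with rfl | rfl
      · exact ⟨hep, fun h => by simp at h, fun _ => hp⟩
      · exact ⟨heq, fun _ => hq, fun h => by simp at h⟩
  have free3STS : ∀ p q r : A, p ∈ StarAlgebra.adjoin ℂ (insert u (B : Set A)) →
      q ∈ StarAlgebra.adjoin ℂ (insert x (B : Set A)) →
      r ∈ StarAlgebra.adjoin ℂ (insert u (B : Set A)) →
      E p = 0 → E q = 0 → E r = 0 → E (p * q * r) = 0 := by
    intro p q r hp hq hr hep heq her
    have h := hfree [(p, true), (q, false), (r, true)] (by simp) ?_ (by simp [List.Chain'])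
    · simpa [mul_assoc] using h
    · rintro s hs
      simp only [List.mem_cons, List.not_mem_nil, or_false] at hs
      rcases hs with rfl | rfl | rfl
      · exact ⟨hep, fun _ => hp, fun h => by simp at h⟩
      · exact ⟨heq, fun h => by simp at h, fun _ => hq⟩
      · exact ⟨her, fun _ => hr, fun h => by simp at h⟩
  have free3TST : ∀ p q r : A, p ∈ StarAlgebra.adjoin ℂ (insert x (B : Set A)) →
      q ∈ StarAlgebra.adjoin ℂ (insert u (B : Set A)) →
      r ∈ StarAlgebra.adjoin ℂ (insert x (B : Set A)) →
      E p = 0 → E q = 0 → E r = 0 → E (p * q * r) = 0 := by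
    intro p q r hp hq hr hep heq her
    have h := hfree [(p, false), (q, true), (r, false)] (by simp) ?_ (by simp [List.Chain'])
    · simpa [mul_assoc] using h
    · rintro s hs
      simp only [List.mem_cons, List.not_mem_nil, or_false] at hs
      rcases hs with rfl | rfl | rfl
      · exact ⟨hep, fun h => by simp at h, fun _ => hp⟩
      · exact ⟨heq, fun _ => hq, fun h => by simp at h⟩
      · exact ⟨her, fun h => by simp at h, fun _ => hr⟩
  -- notation
  set c : A := E (star u * b * u) with hc
  have hcB : c ∈ B := hErange _
  have hEc : E c = c := hEid _ hcB
  have hEsu : E (star u) = 0 := by rw [hEstar, hEu, star_zero]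
  -- circularity: two computations
  have hA : E (y * c * star y) = β true c := by
    have h := hcirc true c hcB [(false, 1)]
      (by intro q hq; simp only [List.mem_singleton] at hq; subst hq; exact one_mem B)
    simpa [cword, hE1, mul_assoc] using h
  have hBc : E (star y * b * y) = β false b := by
    have h := hcirc false b hb [(true, 1)]
      (by intro q hq; simp only [List.mem_singleton] at hq; subst hq; exact one_mem B)
    simpa [cword, hE1, mul_assoc] using h
  have hyst : star y = x * star u := by rw [hy, star_mul, hxsa]
  -- Step 1: E(u * (x c x) * u*) = E(u * E(x c x) * u*)
  set a : A := x * c * x with ha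
  have haT : a ∈ StarAlgebra.adjoin ℂ (insert x (B : Set A)) :=
    mul_mem (mul_mem hxT (hBT _ hcB)) hxT
  have hEa : E (E a) = E a := hEid _ (hErange a)
  have step1 : E (u * a * star u) = E (u * E a * star u) := by
    have hzero : E (u * (a - E a) * star u) = 0 :=
      free3STS u (a - E a) (star u) huS (sub_mem haT (hBT _ (hErange a)))
        (star_mem huS) hEu (by rw [map_sub, hEa, sub_self]) hEsu
    have hsplit : u * a * star u = u * (a - E a) * star u + u * E a * star u := by
      noncomm_ring
    rw [hsplit, map_add, hzero, zero_add]
  -- Step 2: E(x * (u* b u) * x) = E(x * c * x)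
  set d : A := star u * b * u - c with hd
  have hdS : d ∈ StarAlgebra.adjoin ℂ (insert u (B : Set A)) :=
    sub_mem (mul_mem (mul_mem (star_mem huS) (hBS _ hb)) huS) (hBS _ hcB)
  have hEd : E d = 0 := by rw [hd, map_sub, ← hc, hEc, sub_self]
  set e : A := E x with he
  have heB : e ∈ B := hErange x
  have hEx0 : E (x - e) = 0 := by rw [map_sub, he, hEid _ heB, sub_self]
  have hx0T : x - e ∈ StarAlgebra.adjoin ℂ (insert x (B : Set A)) :=
    sub_mem hxT (hBT _ heB)
  have hz1 : E ((x - e) * d * (x - e)) = 0 :=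
    free3TST _ _ _ hx0T hdS hx0T hEx0 hEd hEx0
  have hz2 : E ((x - e) * d * e) = 0 := by
    have h2 : E ((x - e) * d) = 0 := free2TS _ _ hx0T hdS hEx0 hEd
    have := hEbimod ((x - e) * d) 1 (one_mem B) e heB
    rw [one_mul, one_mul] at this
    rw [this, h2, zero_mul]
  have hz3 : E (e * d * (x - e)) = 0 := by
    have h2 : E (d * (x - e)) = 0 := free2ST _ _ hdS hx0T hEd hEx0
    have := hEbimod (d * (x - e)) e heB 1 (one_mem B)
    rw [mul_one, mul_one, ← mul_assoc] at this
    rw [this, h2, mul_zero]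
  have hz4 : E (e * d * e) = 0 := by
    rw [hEbimod d e heB e heB, hEd, mul_zero, zero_mul]
  have hxdx : E (x * d * x) = 0 := by
    have hsplit : x * d * x =
        (x - e) * d * (x - e) + (x - e) * d * e + e * d * (x - e) + e * d * e := by
      noncomm_ring
    rw [hsplit, map_add, map_add, map_add, hz1, hz2, hz3, hz4]
    simp
  have step2 : E (x * (star u * b * u) * x) = E a := by
    have hsplit : x * (star u * b * u) * x = x * d * x + x * c * x := by
      rw [hd]; noncomm_ring
    rw [hsplit, map_add, hxdx, zero_add, ha]
  -- assemble
  calc β true c = E (y * c * star y) := hA.symm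
    _ = E (u * a * star u) := by
        rw [hyst, hy, ha]; congr 1; noncomm_ring
    _ = E (u * E a * star u) := step1
    _ = E (u * E (x * (star u * b * u) * x) * star u) := by rw [step2]
    _ = E (u * E (star y * b * y) * star u) := by
        congr 2
        rw [hyst, hy]; noncomm_ring
    _ = E (u * β false b * star u) := by rw [hBc]
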